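/- For any weighted digraph G on vertex set [n] with arc weights w_{i,j}, the forest enumerator satisfies ∑_F t^(k(F)) ∏_{(i,j)∈F} w_{i,j} = det(L(G) + t·I_n), where the sum is over rooted spanning forests F and L(G) is the Laplacian matrix with off-diagonal entries −w_{i,j} and diagonal entries ∑_k w_{i,k}. -/

import Mathlib

open scoped Classical
open Polynomial

noncomputable section

/-- A rooted (spanning) forest of the digraph with arc relation `A`:
every vertex has at most one outgoing arc (encoded by `f : V → Option V`),
all arcs of the forest are arcs of the digraph, and there is no directed cycle. -/
def IsRootedForest {V : Type*} (A : V → V → Prop) (f : V → Option V) : Prop :=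
  (∀ v w : V, f v = some w → A v w) ∧
  ∀ v : V, ¬ Relation.TransGen (fun a b : V => f a = some b) v v

/-- The number of components (= roots) of a rooted forest. -/
def numRoots {V : Type*} [Fintype V] (f : V → Option V) : ℕ :=
  (Finset.univ.filter fun v => f v = none).card

/-- The rooted-forest enumerator of a weighted digraph:
`∑_F t^(#components of F) ∏_{arcs (v,w) ∈ F} wgt v w`. -/
def forestEnum {V : Type*} [Fintype V] {R : Type*} [CommRing R]
    (A : V → V → Prop) (wgt : V → V → R) (t : R) : R :=
  ∑ f ∈ Finset.univ.filter (fun f : V → Option V => IsRootedForest A f),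
    ∏ v : V, (f v).elim t (wgt v)

/-- Arc relation of the `n`-dimensional hypercube on `{0,1}^n`:
an arc from `u` to `v` flips exactly one coordinate. -/
def cubeArc (n : ℕ) (u v : Fin n → Bool) : Prop :=
  ∃ i : Fin n, v = Function.update u i (!(u i))

/-- Weight of a hypercube arc: an arc of direction `i` and spin `ε`
(i.e. flipping coordinate `i` to the value `ε`) has weight `x i ε`. -/
def cubeWeight {R : Type*} [CommRing R] (n : ℕ) (x : Fin n → Bool → R)
    (u v : Fin n → Bool) : R :=
  ∑ i : Fin n, if v = Function.update u i (!(u i)) then x i (v i) else 0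

end


section MTFAuxiliary
open Relation Finset Matrix

noncomputable section

variable {R : Type*} [CommRing R] {n : ℕ}

/-- The 0/±1 matrix attached to a partial functional graph. -/
def MTFE (f : Fin n → Option (Fin n)) : Matrix (Fin n) (Fin n) R :=
  Matrix.of fun i => (f i).elim (Pi.single i 1) (fun j => Pi.single i 1 - Pi.single j 1)

lemma MTFE_det_zero (f : Fin n → Option (Fin n)) (v : Fin n)
    (hv : Relation.TransGen (fun a b => f a = some b) v v) :
    (MTFE (R := R) f).det = 0 := by
  set stp : Fin n → Fin n → Prop := fun a b => f a = some b with hstp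
  set S : Finset (Fin n) :=
    univ.filter (fun u => ReflTransGen stp v u ∧ ReflTransGen stp u v) with hS
  have hvS : v ∈ S := by
    simp only [hS, mem_filter, mem_univ, true_and]
    exact ⟨Relation.ReflTransGen.refl, Relation.ReflTransGen.refl⟩
  have hnext : ∀ u ∈ S, ∃ u', f u = some u' ∧ u' ∈ S := by
    intro u hu
    rw [hS, mem_filter] at hu
    obtain ⟨-, h1, h2⟩ := hu
    by_cases huv : u = v
    · subst huv
      obtain ⟨b, hb, hbv⟩ := (Relation.TransGen.head'_iff).mp hv
      exact ⟨b, hb, by simp [hS, mem_filter, Relation.ReflTransGen.single hb, hbv]⟩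
    · rcases h2.cases_head with h | ⟨c, hc, hcv⟩
      · exact absurd h huv
      · refine ⟨c, hc, ?_⟩
        simp only [hS, mem_filter, mem_univ, true_and]
        exact ⟨h1.trans (Relation.ReflTransGen.single hc), hcv⟩
  have hsurj : ∀ u ∈ S, ∃ p ∈ S, f p = some u := by
    intro u hu
    rw [hS, mem_filter] at hu
    obtain ⟨-, h1, h2⟩ := hu
    by_cases huv : u = v
    · subst huv
      obtain ⟨p, hp, hpv⟩ := (Relation.TransGen.tail'_iff).mp hv
      exact ⟨p, by simp [hS, mem_filter, hp, Relation.ReflTransGen.single hpv], hpv⟩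
    · rcases h1.cases_tail with h | ⟨p, hp, hpu⟩
      · exact absurd h huv
      · refine ⟨p, ?_, hpu⟩
        simp only [hS, mem_filter, mem_univ, true_and]
        exact ⟨hp, (Relation.ReflTransGen.single hpu).trans h2⟩
  -- the successor function on the cycle
  set nx : Fin n → Fin n := fun u => (f u).getD u with hnx
  have hnx_some : ∀ u ∈ S, f u = some (nx u) ∧ nx u ∈ S := by
    intro u hu
    obtain ⟨u', hu', hu'S⟩ := hnext u hu
    have : nx u = u' := by simp [hnx, hu']
    rw [this]; exact ⟨hu', hu'S⟩
  have hinj : ∀ a₁ ∈ S, ∀ a₂ ∈ S, nx a₁ = nx a₂ → a₁ = a₂ := by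
    have := Finset.inj_on_of_surj_on_of_card_le (s := S) (t := S)
      (fun a _ => nx a) (fun a ha => (hnx_some a ha).2)
      (fun b hb => by
        obtain ⟨p, hp, hpb⟩ := hsurj b hb
        exact ⟨p, hp, by simp [hnx, hpb]⟩) le_rfl
    intro a₁ h₁ a₂ h₂ h; exact this h₁ h₂ h
  have himg : S.image nx = S := by
    apply Finset.Subset.antisymm
    · intro x hx
      obtain ⟨u, hu, hux⟩ := Finset.mem_image.mp hx
      exact hux ▸ (hnx_some u hu).2
    · intro u hu
      obtain ⟨p, hp, hpu⟩ := hsurj u hu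
      exact Finset.mem_image.mpr ⟨p, hp, by simp [hnx, hpu]⟩
  have hsum : ∑ u ∈ S, (MTFE (R := R) f) u = 0 := by
    have h1 : ∑ u ∈ S, (MTFE (R := R) f) u
        = ∑ u ∈ S, (Pi.single u 1 - Pi.single (nx u) 1) := by
      refine Finset.sum_congr rfl fun u hu => ?_
      have h := (hnx_some u hu).1
      show (f u).elim _ _ = _
      rw [h]
      rfl
    rw [h1, Finset.sum_sub_distrib]
    have h2 : ∑ u ∈ S, (Pi.single (nx u) (1 : R) : Fin n → R)
        = ∑ x ∈ S, Pi.single x (1 : R) := by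
      have := Finset.sum_image (s := S) (g := nx)
        (f := fun x => (Pi.single x (1:R) : Fin n → R)) (by exact hinj)
      rw [himg] at this
      exact this.symm
    rw [h2, sub_self]
  -- conclude det = 0
  set M : Matrix (Fin n) (Fin n) R := MTFE f with hM
  have hvrow : M v = (0 : R) • M v + ∑ k ∈ S.erase v, (-1 : R) • M k := by
    have := Finset.add_sum_erase S (fun u => M u) hvS
    have h0 : M v + ∑ k ∈ S.erase v, M k = 0 := by rw [this]; exact hsum
    have : M v = - ∑ k ∈ S.erase v, M k := by linear_combination h0
    erw [zero_smul, zero_add, this, ← Finset.sum_neg_distrib]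
    refine Finset.sum_congr rfl fun k _ => ?_
    simp
  calc M.det = (M.updateRow v ((0:R) • M v + ∑ k ∈ S.erase v, (-1:R) • M k)).det := by
        rw [← hvrow, Matrix.updateRow_eq_self]
    _ = (0 : R) • M.det :=
        Matrix.det_updateRow_sum_aux M (S.erase v) (Finset.notMem_erase v S) _ _
    _ = 0 := by simp

lemma MTFE_apply_none (f : Fin n → Option (Fin n)) {i : Fin n} (h : f i = none) :
    (MTFE (R := R) f) i = Pi.single i 1 := by
  show (f i).elim _ _ = _; rw [h]; rfl

lemma MTFE_apply_some (f : Fin n → Option (Fin n)) {i j : Fin n} (h : f i = some j) :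
    (MTFE (R := R) f) i = Pi.single i 1 - Pi.single j 1 := by
  show (f i).elim _ _ = _; rw [h]; rfl

lemma MTFE_det_one (f : Fin n → Option (Fin n))
    (hf : ∀ v, ¬ Relation.TransGen (fun a b => f a = some b) v v) :
    (MTFE (R := R) f).det = 1 := by
  set stp : Fin n → Fin n → Prop := fun a b => f a = some b with hstp
  set h : Fin n → ℕ := fun u => (univ.filter (fun x => ReflTransGen stp u x)).card with hh
  have hlt : ∀ i j : Fin n, f i = some j → h j < h i := by
    intro i j hij
    apply Finset.card_lt_card
    constructor
    · intro x hx
      rw [mem_filter] at hx ⊢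
      exact ⟨mem_univ _, Relation.ReflTransGen.head hij hx.2⟩
    · intro hsub
      have hi : i ∈ univ.filter (fun x => ReflTransGen stp i x) :=
        mem_filter.mpr ⟨mem_univ _, Relation.ReflTransGen.refl⟩
      have := hsub hi
      rw [mem_filter] at this
      exact hf i (Relation.TransGen.head' hij this.2)
  have hBT : ((MTFE (R := R) f)ᵀ).BlockTriangular h := by
    intro i j hji
    show (MTFE (R := R) f) j i = 0
    have hij : i ≠ j := fun e => absurd (e ▸ hji) (lt_irrefl _)
    cases hfj : f j with
    | none => rw [MTFE_apply_none f hfj, Pi.single_apply, if_neg hij]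
    | some k =>
      have hik : i ≠ k := by
        rintro rfl
        exact absurd (lt_trans hji (hlt j i hfj)) (lt_irrefl _)
      rw [MTFE_apply_some f hfj]
      simp [Pi.single_apply, if_neg hij, if_neg hik]
  rw [← Matrix.det_transpose]
  rw [hBT.det]
  apply Finset.prod_eq_one
  intro a _
  have hblk : ((MTFE (R := R) f)ᵀ.toSquareBlock h a) = 1 := by
    ext i j
    rcases i with ⟨i, hi⟩
    rcases j with ⟨j, hj⟩
    simp only [Matrix.toSquareBlock_def, Matrix.of_apply, Matrix.transpose_apply]
    by_cases hij : i = j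
    · subst hij
      rw [Matrix.one_apply_eq]
      cases hfi : f i with
      | none => rw [MTFE_apply_none f hfi, Pi.single_apply, if_pos rfl]
      | some k =>
        have hik : k ≠ i := fun e => absurd (e ▸ hlt i k hfi) (lt_irrefl _)
        rw [MTFE_apply_some f hfi]
        simp only [Pi.sub_apply, Pi.single_apply, if_pos rfl,
          if_neg (fun e : i = k => hik e.symm), sub_zero, if_true]
    · rw [Matrix.one_apply_ne (by simpa using hij)]
      cases hfj : f j with
      | none => rw [MTFE_apply_none f hfj, Pi.single_apply, if_neg hij]
      | some k =>
        have hik : i ≠ k := by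
          rintro rfl
          have := hlt j i hfj
          rw [hi, hj] at this
          exact absurd this (lt_irrefl _)
        rw [MTFE_apply_some f hfj]
        simp [Pi.single_apply, if_neg hik, if_neg (fun e : i = j => hij e)]
  rw [hblk, Matrix.det_one]

end
end MTFAuxiliary

open Relation Finset Matrix in
/-- Directed, weighted, forest version of the matrix-tree theorem: for a weighted
digraph on `[n]` with arc weights `w i j` (and no loops), the rooted-forest
enumerator equals `det(L + t·I)` where `L` is the Laplacian with off-diagonal
entries `-w i j` and diagonal entries `∑ₖ w i k`. -/
theorem matrix_tree_forest_theorem {R : Type*} [CommRing R]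
    (n : ℕ) (w : Fin n → Fin n → R) (hw : ∀ i : Fin n, w i i = 0) (t : R) :
    forestEnum (fun i j : Fin n => i ≠ j) w t =
      (Matrix.of (fun i j : Fin n => if i = j then ∑ k : Fin n, w i k else - w i j)
        + t • (1 : Matrix (Fin n) (Fin n) R)).det := by
  set r : Fin n → Option (Fin n) → (Fin n → R) := fun i c =>
    c.elim (t • (Pi.single i (1:R) : Fin n → R))
      (fun j => w i j • ((Pi.single i (1:R) : Fin n → R) - Pi.single j 1)) with hr
  have hrow : ((Matrix.of (fun i j : Fin n => if i = j then ∑ k : Fin n, w i k else - w i j)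
      + t • (1 : Matrix (Fin n) (Fin n) R)) : Matrix (Fin n) (Fin n) R)
      = fun i => ∑ c : Option (Fin n), r i c := by
    funext i j'
    have key : ∑ x : Fin n,
        w i x * ((if j' = i then (1:R) else 0) - (if j' = x then 1 else 0))
        = (if j' = i then ∑ k : Fin n, w i k else 0) - w i j' := by
      calc ∑ x : Fin n, w i x * ((if j' = i then (1:R) else 0) - (if j' = x then 1 else 0))
          = ∑ x : Fin n, ((if j' = i then w i x else 0) - (if j' = x then w i x else 0)) :=
            Finset.sum_congr rfl fun x _ => by split_ifs <;> ring
        _ = (∑ x : Fin n, if j' = i then w i x else 0)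
              - (∑ x : Fin n, if j' = x then w i x else 0) := Finset.sum_sub_distrib _ _
        _ = (if j' = i then ∑ k : Fin n, w i k else 0) - w i j' := by
            rw [Finset.sum_ite_eq univ j' (w i), if_pos (mem_univ _)]
            by_cases h : j' = i <;> simp [h]
    show (if i = j' then ∑ k : Fin n, w i k else - w i j') + t * (if i = j' then 1 else 0)
        = (∑ c : Option (Fin n), r i c) j'
    rw [Fintype.sum_option]
    simp only [hr, Option.elim, Pi.add_apply, Finset.sum_apply, Pi.smul_apply, Pi.sub_apply,
      Pi.single_apply, smul_eq_mul]
    rw [key]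
    by_cases h : i = j'
    · subst h; simp [hw i]; ring
    · have h' : ¬ j' = i := fun e => h e.symm
      simp only [if_neg h, if_neg h', zero_add]
      ring
  have hdet : ((Matrix.of (fun i j : Fin n => if i = j then ∑ k : Fin n, w i k else - w i j)
      + t • (1 : Matrix (Fin n) (Fin n) R))).det
      = ∑ f : Fin n → Option (Fin n),
          (∏ i : Fin n, (f i).elim t (w i)) • (MTFE (R := R) f).det := by
    rw [show ((Matrix.of (fun i j : Fin n => if i = j then ∑ k : Fin n, w i k else - w i j)
      + t • (1 : Matrix (Fin n) (Fin n) R))).det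
      = Matrix.detRowAlternating ((Matrix.of (fun i j : Fin n => if i = j then ∑ k : Fin n, w i k else - w i j)
      + t • (1 : Matrix (Fin n) (Fin n) R))) from rfl]
    rw [hrow, ← AlternatingMap.coe_multilinearMap, MultilinearMap.map_sum]
    refine Finset.sum_congr rfl fun f _ => ?_
    have hsm : (fun i => r i (f i)) = fun i => ((f i).elim t (w i)) • (MTFE (R := R) f) i := by
      funext i
      cases hfi : f i with
      | none =>
        have : (MTFE (R := R) f) i = Pi.single i 1 := by
          show (f i).elim _ _ = _; rw [hfi]; rfl
        simp [hr, hfi, this]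
      | some j =>
        have : (MTFE (R := R) f) i = Pi.single i 1 - Pi.single j 1 := by
          show (f i).elim _ _ = _; rw [hfi]; rfl
        simp [hr, hfi, this]
    erw [hsm, MultilinearMap.map_smul_univ]
    rfl
  rw [hdet]
  have hval : ∀ f : Fin n → Option (Fin n),
      (MTFE (R := R) f).det
        = if IsRootedForest (fun i j : Fin n => i ≠ j) f then 1 else 0 := by
    intro f
    by_cases hF : IsRootedForest (fun i j : Fin n => i ≠ j) f
    · rw [if_pos hF]
      exact MTFE_det_one f hF.2
    · rw [if_neg hF]
      have : ¬ ∀ v, ¬ Relation.TransGen (fun a b : Fin n => f a = some b) v v := by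
        intro hacyc
        exact hF ⟨fun v u hvu => by
          rintro rfl
          exact hacyc v (Relation.TransGen.single hvu), hacyc⟩
      push_neg at this
      obtain ⟨v, hv⟩ := this
      exact MTFE_det_zero f v hv
  rw [forestEnum, Finset.sum_filter]
  refine Finset.sum_congr ?_ fun f _ => ?_
  · exact congrArg (fun i => @Finset.univ _ i) (Subsingleton.elim _ _)
  rw [hval f]
  split_ifs <;> simp
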